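/- arXiv:2011.14987 — 3 statements merged into one kernel-verified Lean document; each statement's English description precedes it below -/
import Mathlib

section
/- For every u ∈ H^1(0,∞), one has ∑_{n=2}^∞ n^{-1} |u(ln n)|^2 ≤ C ∫_0^∞ (|u'(x)|^2 + |u(x)|^2) dx for some universal constant C. -/
open MeasureTheory Filter

private lemma norm_sq_complex (z : ℂ) : ‖z‖ ^ 2 = z.re * z.re + z.im * z.im := by
  rw [← Complex.normSq_apply, Complex.sq_norm]

/-- Example 3.2 (inequality (3.9)): for `u ∈ H¹(0,∞)`,
`∑_{n≥2} n⁻¹ |u(ln n)|² ≤ C ∫₀^∞ (|u'|² + |u|²)` for a universal constant `C`. -/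
theorem sum_log_trace_inequality :
    ∃ C : ℝ, ∀ u u' : ℝ → ℂ,
      (∀ y ∈ Set.Ici (0:ℝ), HasDerivAt u (u' y) y) →
      ContinuousOn u' (Set.Ici 0) →
      IntegrableOn (fun y => ‖u y‖ ^ 2) (Set.Ioi (0:ℝ)) →
      IntegrableOn (fun y => ‖u' y‖ ^ 2) (Set.Ioi (0:ℝ)) →
      ∑' n : ℕ, ((n : ℝ) + 2)⁻¹ * ‖u (Real.log ((n : ℝ) + 2))‖ ^ 2 ≤
        C * ∫ y in Set.Ioi (0:ℝ), (‖u' y‖ ^ 2 + ‖u y‖ ^ 2) := by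
  refine ⟨9/4, fun u u' hderiv hcont hu2 hu'2 => ?_⟩
  have hnn : ∀ y : ℝ, 0 ≤ ‖u' y‖ ^ 2 + ‖u y‖ ^ 2 := fun y => by positivity
  have hInt : IntegrableOn (fun y => ‖u' y‖ ^ 2 + ‖u y‖ ^ 2) (Set.Ioi 0) := hu'2.add hu2
  have hI0 : 0 ≤ ∫ y in Set.Ioi (0:ℝ), (‖u' y‖ ^ 2 + ‖u y‖ ^ 2) :=
    setIntegral_nonneg measurableSet_Ioi fun y _ => hnn y
  have hucont : ContinuousOn u (Set.Ici 0) := fun y hy =>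
    (hderiv y hy).continuousAt.continuousWithinAt
  -- the derivative of ‖u‖²
  set g : ℝ → ℝ := fun y => 2 * ((u y).re * (u' y).re + (u y).im * (u' y).im) with hg_def
  have hgderiv : ∀ y ∈ Set.Ici (0:ℝ), HasDerivAt (fun t => ‖u t‖ ^ 2) (g y) y := by
    intro y hy
    have h1 : HasDerivAt (fun t => (u t).re) ((u' y).re) y :=
      Complex.reCLM.hasFDerivAt.comp_hasDerivAt y (hderiv y hy)
    have h2 : HasDerivAt (fun t => (u t).im) ((u' y).im) y :=
      Complex.imCLM.hasFDerivAt.comp_hasDerivAt y (hderiv y hy)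
    have key := (h1.mul h1).add (h2.mul h2)
    have heq : (fun t => ‖u t‖ ^ 2) = fun t => (u t).re * (u t).re + (u t).im * (u t).im :=
      funext fun t => norm_sq_complex _
    rw [heq]
    exact key.congr_deriv (by simp only [hg_def]; ring)
  have hgcont : ContinuousOn g (Set.Ici 0) := by
    have hre : ContinuousOn (fun t => (u t).re) (Set.Ici (0:ℝ)) :=
      Complex.continuous_re.comp_continuousOn hucont
    have him : ContinuousOn (fun t => (u t).im) (Set.Ici (0:ℝ)) :=
      Complex.continuous_im.comp_continuousOn hucont
    have hre' : ContinuousOn (fun t => (u' t).re) (Set.Ici (0:ℝ)) :=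
      Complex.continuous_re.comp_continuousOn hcont
    have him' : ContinuousOn (fun t => (u' t).im) (Set.Ici (0:ℝ)) :=
      Complex.continuous_im.comp_continuousOn hcont
    exact continuousOn_const.mul ((hre.mul hre').add (him.mul him'))
  have hgle : ∀ y : ℝ, |g y| ≤ ‖u' y‖ ^ 2 + ‖u y‖ ^ 2 := by
    intro y
    have hg : g y = 2 * ((u y).re * (u' y).re + (u y).im * (u' y).im) := rfl
    rw [norm_sq_complex, norm_sq_complex, hg, abs_le]
    constructor <;>
      nlinarith [sq_nonneg ((u y).re + (u' y).re), sq_nonneg ((u y).im + (u' y).im),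
        sq_nonneg ((u y).re - (u' y).re), sq_nonneg ((u y).im - (u' y).im)]
  -- key interval estimate
  have key : ∀ a b : ℝ, 0 < a → a ≤ b →
      (b - a) * ‖u a‖ ^ 2 ≤ (1 + (b - a)) * ∫ y in Set.Ioc a b, (‖u' y‖ ^ 2 + ‖u y‖ ^ 2) := by
    intro a b ha hab
    have hsub : Set.Icc a b ⊆ Set.Ici (0:ℝ) := fun x hx => le_trans ha.le hx.1
    have hIocsub : Set.Ioc a b ⊆ Set.Ioi (0:ℝ) := fun x hx => lt_trans ha hx.1
    have hIntab : IntegrableOn (fun y => ‖u' y‖ ^ 2 + ‖u y‖ ^ 2) (Set.Ioc a b) :=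
      hInt.mono_set hIocsub
    set K := ∫ y in Set.Ioc a b, (‖u' y‖ ^ 2 + ‖u y‖ ^ 2) with hK
    have hK0 : 0 ≤ K := setIntegral_nonneg measurableSet_Ioc fun y _ => hnn y
    obtain ⟨x₀, hx₀mem, hx₀min⟩ := isCompact_Icc.exists_isMinOn (Set.nonempty_Icc.mpr hab)
      (((hucont.mono hsub).norm).pow 2)
    have hax₀ : a ≤ x₀ := hx₀mem.1
    have hsub' : Set.uIcc a x₀ ⊆ Set.Ici (0:ℝ) := by
      rw [Set.uIcc_of_le hax₀]
      exact fun x hx => le_trans ha.le hx.1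
    have hftc : ∫ t in a..x₀, g t = ‖u x₀‖ ^ 2 - ‖u a‖ ^ 2 := by
      apply intervalIntegral.integral_eq_sub_of_hasDerivAt
      · exact fun t ht => hgderiv t (hsub' ht)
      · exact (hgcont.mono hsub').intervalIntegrable
    have habs : |∫ t in a..x₀, g t| ≤ K := by
      have hIocsub2 : Set.Ioc a x₀ ⊆ Set.Ioc a b := Set.Ioc_subset_Ioc_right hx₀mem.2
      calc |∫ t in a..x₀, g t| ≤ ∫ t in a..x₀, |g t| :=
            intervalIntegral.abs_integral_le_integral_abs hax₀
        _ = ∫ t in Set.Ioc a x₀, |g t| := intervalIntegral.integral_of_le hax₀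
        _ ≤ ∫ t in Set.Ioc a x₀, (‖u' t‖ ^ 2 + ‖u t‖ ^ 2) := by
            apply setIntegral_mono_on
            · have hIcc : Set.Icc a x₀ ⊆ Set.Ici (0:ℝ) := fun x hx => le_trans ha.le hx.1
              exact (((hgcont.mono hIcc).abs).integrableOn_Icc).mono_set Set.Ioc_subset_Icc_self
            · exact hIntab.mono_set hIocsub2
            · exact measurableSet_Ioc
            · exact fun t _ => hgle t
        _ ≤ K := setIntegral_mono_set hIntab (Filter.Eventually.of_forall fun y => hnn y)
            hIocsub2.eventuallyLE
    have h1 : ‖u a‖ ^ 2 ≤ ‖u x₀‖ ^ 2 + K := by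
      have := (abs_le.mp habs).1
      linarith [hftc]
    have h2 : (b - a) * ‖u x₀‖ ^ 2 ≤ ∫ y in Set.Ioc a b, ‖u y‖ ^ 2 := by
      have hconst : ∫ _ in Set.Ioc a b, ‖u x₀‖ ^ 2 = (b - a) * ‖u x₀‖ ^ 2 := by
        rw [setIntegral_const, Real.volume_real_Ioc_of_le hab,
          smul_eq_mul]
      rw [← hconst]
      apply setIntegral_mono_on (integrableOn_const (by
        rw [Real.volume_Ioc]; exact ENNReal.ofReal_ne_top)) (hu2.mono_set hIocsub)
        measurableSet_Ioc
      exact fun y hy => isMinOn_iff.mp hx₀min y (Set.Ioc_subset_Icc_self hy)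
    have h3 : ∫ y in Set.Ioc a b, ‖u y‖ ^ 2 ≤ K := by
      apply setIntegral_mono_on (hu2.mono_set hIocsub) hIntab measurableSet_Ioc
      exact fun y _ => le_add_of_nonneg_left (by positivity)
    have h4 : (b - a) * ‖u a‖ ^ 2 ≤ (b - a) * (‖u x₀‖ ^ 2 + K) :=
      mul_le_mul_of_nonneg_left h1 (sub_nonneg.mpr hab)
    nlinarith [h4, h2, h3]
  set a : ℕ → ℝ := fun n => Real.log ((n:ℝ) + 2) with ha_def
  have hapos : ∀ n : ℕ, 0 < a n := fun n => Real.log_pos (by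
    have h : (0:ℝ) ≤ n := Nat.cast_nonneg n
    show (1:ℝ) < (n:ℝ) + 2
    linarith)
  have hamono : ∀ n : ℕ, a n ≤ a (n+1) := fun n => by
    apply Real.log_le_log (by positivity)
    push_cast; linarith
  have hmono' : Monotone a := monotone_nat_of_le_succ hamono
  have hstep : ∀ n : ℕ, ((n:ℝ)+2)⁻¹ * ‖u (Real.log ((n:ℝ)+2))‖ ^ 2 ≤
      (9/4) * ∫ y in Set.Ioc (a n) (a (n+1)), (‖u' y‖ ^ 2 + ‖u y‖ ^ 2) := by
    intro n
    have hn : (0:ℝ) ≤ n := Nat.cast_nonneg n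
    have h2p : (0:ℝ) < (n:ℝ)+2 := by linarith
    have h3p : (0:ℝ) < (n:ℝ)+3 := by linarith
    have hb : a (n+1) = Real.log ((n:ℝ)+3) := by
      simp only [ha_def]; congr 1; push_cast; ring
    have hdiff : a (n+1) - a n = Real.log (((n:ℝ)+3)/((n:ℝ)+2)) := by
      rw [hb, ha_def, Real.log_div (by positivity) (by positivity)]
    have hba1 : a (n+1) - a n ≤ ((n:ℝ)+2)⁻¹ := by
      rw [hdiff]
      have h' := Real.log_le_sub_one_of_pos (show (0:ℝ) < ((n:ℝ)+3)/((n:ℝ)+2) by positivity)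
      have heq : ((n:ℝ)+3)/((n:ℝ)+2) - 1 = ((n:ℝ)+2)⁻¹ := by field_simp; norm_num
      linarith
    have hba2 : ((n:ℝ)+3)⁻¹ ≤ a (n+1) - a n := by
      rw [hdiff]
      have h' := Real.log_le_sub_one_of_pos (show (0:ℝ) < ((n:ℝ)+2)/((n:ℝ)+3) by positivity)
      rw [Real.log_div (by positivity) (by positivity)] at h'
      rw [Real.log_div (by positivity) (by positivity)]
      have heq : ((n:ℝ)+2)/((n:ℝ)+3) - 1 = -(((n:ℝ)+3)⁻¹) := by
        field_simp; norm_num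
      linarith
    have hhalf : a (n+1) - a n ≤ 1/2 := by
      have h12 : ((n:ℝ)+2)⁻¹ ≤ 1/2 := by
        rw [show (1:ℝ)/2 = (2:ℝ)⁻¹ by norm_num]
        exact inv_anti₀ (by norm_num) (by linarith)
      linarith
    have e1 : ((n:ℝ)+2)⁻¹ ≤ (3/2) * (((n:ℝ)+3)⁻¹) := by
      rw [show (3:ℝ)/2 * (((n:ℝ)+3)⁻¹) = 3/(2*((n:ℝ)+3)) by field_simp,
        inv_eq_one_div, div_le_div_iff₀ h2p (by positivity)]
      linarith
    have e2 : ((n:ℝ)+2)⁻¹ ≤ (3/2)*(a (n+1) - a n) :=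
      le_trans e1 (mul_le_mul_of_nonneg_left hba2 (by norm_num))
    set K := ∫ y in Set.Ioc (a n) (a (n+1)), (‖u' y‖ ^ 2 + ‖u y‖ ^ 2) with hKd
    have hK0 : 0 ≤ K := setIntegral_nonneg measurableSet_Ioc fun y _ => hnn y
    have c2 : (a (n+1) - a n) * ‖u (a n)‖ ^ 2 ≤ (1 + (a (n+1) - a n)) * K :=
      key (a n) (a (n+1)) (hapos n) (hamono n)
    have c1 : ((n:ℝ)+2)⁻¹ * ‖u (a n)‖ ^ 2 ≤ ((3/2)*(a (n+1) - a n)) * ‖u (a n)‖ ^ 2 :=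
      mul_le_mul_of_nonneg_right e2 (by positivity)
    have c3 : (1 + (a (n+1) - a n)) * K ≤ (3/2) * K :=
      mul_le_mul_of_nonneg_right (by linarith) hK0
    have han : a n = Real.log ((n:ℝ)+2) := rfl
    rw [← han]
    nlinarith [c1, c2, c3]
  have hIocsub0 : ∀ N : ℕ, Set.Ioc (a 0) (a N) ⊆ Set.Ioi (0:ℝ) :=
    fun N x hx => lt_trans (hapos 0) hx.1
  have hsum : ∀ N : ℕ, (∑ n ∈ Finset.range N,
      ∫ y in Set.Ioc (a n) (a (n+1)), (‖u' y‖ ^ 2 + ‖u y‖ ^ 2)) =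
      ∫ y in Set.Ioc (a 0) (a N), (‖u' y‖ ^ 2 + ‖u y‖ ^ 2) := by
    intro N
    induction N with
    | zero => simp
    | succ N ih =>
      rw [Finset.sum_range_succ, ih,
        ← setIntegral_union (Set.Ioc_disjoint_Ioc_of_le le_rfl) measurableSet_Ioc
          (hInt.mono_set (hIocsub0 N))
          (hInt.mono_set (fun x hx => lt_trans (lt_of_lt_of_le (hapos 0)
            (hmono' (Nat.zero_le N))) hx.1)),
        Set.Ioc_union_Ioc_eq_Ioc (hmono' (Nat.zero_le N)) (hamono N)]
  apply Real.tsum_le_of_sum_range_le (fun n => by positivity)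
  intro N
  calc ∑ n ∈ Finset.range N, ((n:ℝ)+2)⁻¹ * ‖u (Real.log ((n:ℝ)+2))‖ ^ 2
      ≤ ∑ n ∈ Finset.range N,
          (9/4) * ∫ y in Set.Ioc (a n) (a (n+1)), (‖u' y‖ ^ 2 + ‖u y‖ ^ 2) :=
        Finset.sum_le_sum fun n _ => hstep n
    _ = (9/4) * ∫ y in Set.Ioc (a 0) (a N), (‖u' y‖ ^ 2 + ‖u y‖ ^ 2) := by
        rw [← Finset.mul_sum, hsum N]
    _ ≤ (9/4) * ∫ y in Set.Ioi (0:ℝ), (‖u' y‖ ^ 2 + ‖u y‖ ^ 2) := by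
        apply mul_le_mul_of_nonneg_left _ (by norm_num)
        exact setIntegral_mono_set hInt (Filter.Eventually.of_forall fun y => hnn y)
          (HasSubset.Subset.eventuallyLE (hIocsub0 N))
end

section
/- Let s ∈ (0,1], r ≥ 0 with 2r ≥ 1 - s, set x_n = n^s and suppose |v_n| ≤ C(1+n)^{-r}. Then sup_{R > 0} ∑_{n : x_n ∈ (R, R+1)} v_n^2 < ∞, i.e., the squared weights v_n^2 have uniformly bounded sums over all unit windows of the values n^s. -/
open Filter

private lemma bern_low {s : ℝ} (hs : 0 < s) (hs1 : s ≤ 1) {x : ℝ} (hx : 1 ≤ x) :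
    s * x ^ (s - 1) ≤ x ^ s - (x - 1) ^ s := by
  have hx0 : (0:ℝ) < x := lt_of_lt_of_le one_pos hx
  have hinv : 1 / x ≤ 1 := by rw [div_le_one hx0]; exact hx
  have h1 : (0:ℝ) ≤ 1 + -(1/x) := by linarith
  have hb := rpow_one_add_le_one_add_mul_self (s := -(1/x)) (by linarith) hs.le hs1
  have hxs : (0:ℝ) ≤ x ^ s := Real.rpow_nonneg hx0.le s
  have hfact : (x - 1) ^ s = x ^ s * (1 + -(1/x)) ^ s := by
    rw [← Real.mul_rpow hx0.le h1]
    congr 1; field_simp; ring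
  have hpow : x ^ (s-1) = x ^ s / x := by
    rw [Real.rpow_sub hx0, Real.rpow_one]
  have h2 : x ^ s * (1 + -(1/x)) ^ s ≤ x ^ s * (1 + s * -(1/x)) :=
    mul_le_mul_of_nonneg_left hb hxs
  have h3 : x ^ s * (1 + s * -(1/x)) = x ^ s - s * (x ^ s / x) := by
    field_simp; ring
  rw [hfact, hpow]
  linarith [h2, h3.le]

private lemma bern_up {s : ℝ} (hs : 0 < s) (hs1 : s ≤ 1) {x : ℝ} (hx : 1 ≤ x) :
    (x + 1) ^ s ≤ x ^ s + 1 := by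
  have hx0 : (0:ℝ) < x := lt_of_lt_of_le one_pos hx
  have h1 : (0:ℝ) ≤ 1 + 1/x := by positivity
  have hb := rpow_one_add_le_one_add_mul_self (s := 1/x) (by nlinarith [one_div_pos.mpr hx0]) hs.le hs1
  have hxs : (0:ℝ) ≤ x ^ s := Real.rpow_nonneg hx0.le s
  have hfact : (x + 1) ^ s = x ^ s * (1 + 1/x) ^ s := by
    rw [← Real.mul_rpow hx0.le h1]
    congr 1; field_simp
  have hpow : x ^ s / x = x ^ (s-1) := by
    rw [Real.rpow_sub hx0, Real.rpow_one]
  have hle1 : x ^ (s-1) ≤ 1 := Real.rpow_le_one_of_one_le_of_nonpos hx (by linarith)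
  have h2 : x ^ s * (1 + 1/x) ^ s ≤ x ^ s * (1 + s * (1/x)) :=
    mul_le_mul_of_nonneg_left hb hxs
  have h3 : x ^ s * (1 + s * (1/x)) = x ^ s + s * (x ^ s / x) := by
    field_simp
  have h4 : s * (x ^ s / x) ≤ 1 := by
    rw [hpow]
    have h := mul_le_one₀ hs1 (Real.rpow_nonneg hx0.le _) hle1
    linarith
  calc (x + 1) ^ s = x ^ s * (1 + 1/x) ^ s := hfact
    _ ≤ x ^ s * (1 + s * (1/x)) := h2
    _ = x ^ s + s * (x ^ s / x) := h3
    _ ≤ x ^ s + 1 := by linarith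

/-- Condition (1.7) implies the window condition (1.5): if `s ∈ (0,1]`, `r ≥ 0`,
`2r ≥ 1 - s`, `x_n = n^s` and `|v_n| ≤ C(1+n)^{-r}`, then
`sup_{R>0} ∑_{n : n^s ∈ (R,R+1)} v_n² < ∞`. -/
theorem window_condition_of_power_weights
    (s r : ℝ) (hs : 0 < s) (hs1 : s ≤ 1) (hr : 0 ≤ r) (hrs : 2 * r ≥ 1 - s)
    (v : ℕ → ℝ) (C : ℝ) (hv : ∀ n : ℕ, |v n| ≤ C * (1 + (n : ℝ)) ^ (-r)) :
    ∃ K : ℝ, ∀ R : ℝ, 0 < R →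
      ∑' n : {n : ℕ // (n : ℝ) ^ s ∈ Set.Ioo R (R + 1)}, (v n) ^ 2 ≤ K := by
  have hC : (0:ℝ) ≤ C := by
    have h0 := (abs_nonneg (v 0)).trans (hv 0)
    simpa [Real.one_rpow] using h0
  refine ⟨C ^ 2 / s * 2, ?_⟩
  intro R hR
  set f : ℕ → ℝ := fun n => v n ^ 2 with hf
  set A : Set ℕ := {n : ℕ | (n : ℝ) ^ s ∈ Set.Ioo R (R + 1)} with hA
  have hfin : A.Finite := by
    apply Set.Finite.subset (Set.finite_Iio (⌈(R+1) ^ (1/s)⌉₊ + 1))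
    intro n hn
    have h1 : (n:ℝ)^s < R+1 := hn.2
    have h2 : (n:ℝ) < (R+1)^(1/s) := by
      have h3 := Real.rpow_lt_rpow (Real.rpow_nonneg n.cast_nonneg s) h1
        (by positivity : (0:ℝ) < 1/s)
      rwa [← Real.rpow_mul n.cast_nonneg, mul_one_div_cancel hs.ne', Real.rpow_one] at h3
    exact Set.mem_Iio.mpr ((Nat.lt_ceil.mpr h2).trans_le (Nat.le_succ _))
  have h0A : 0 ∉ A := by
    intro h
    have h' : (0:ℝ) ^ s ∈ Set.Ioo R (R+1) := by simpa [hA] using h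
    rw [Real.zero_rpow hs.ne'] at h'
    exact absurd h'.1 (not_lt.mpr hR.le)
  haveI : Fintype ↥A := hfin.fintype
  have hts : ∑' n : A, f n = ∑ n ∈ hfin.toFinset, f n := by
    rw [tsum_subtype A f, tsum_eq_sum (s := hfin.toFinset)
      (fun n hn => Set.indicator_of_notMem (by simpa [hfin.mem_toFinset] using hn) f)]
    exact Finset.sum_congr rfl fun n hn =>
      Set.indicator_of_mem (hfin.mem_toFinset.mp hn) f
  rw [show (∑' n : {n : ℕ // (n : ℝ) ^ s ∈ Set.Ioo R (R + 1)}, (v n) ^ 2)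
      = ∑' n : A, f n from rfl, hts]
  set T := hfin.toFinset with hT
  set g : ℕ → ℝ := fun n => (n:ℝ) ^ s with hg
  have hterm : ∀ n ∈ T, f n ≤ C ^ 2 / s * (g (n+1) - g n) := by
    intro n _
    have hb : (0:ℝ) < 1 + (n:ℝ) := by positivity
    have h1 : f n ≤ C ^ 2 * ((1 + (n:ℝ)) ^ (-r)) ^ 2 := by
      have h := pow_le_pow_left₀ (abs_nonneg (v n)) (hv n) 2
      rw [sq_abs] at h
      calc f n = v n ^ 2 := rfl
        _ ≤ (C * (1 + (n:ℝ)) ^ (-r)) ^ 2 := h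
        _ = C ^ 2 * ((1 + (n:ℝ)) ^ (-r)) ^ 2 := by ring
    have h2 : ((1 + (n:ℝ)) ^ (-r)) ^ 2 = (1 + (n:ℝ)) ^ (-(2*r)) := by
      rw [← Real.rpow_natCast ((1 + (n:ℝ)) ^ (-r)) 2, ← Real.rpow_mul hb.le]
      norm_num; congr 1; ring
    have h3 : (1 + (n:ℝ)) ^ (-(2*r)) ≤ (1 + (n:ℝ)) ^ (s - 1) :=
      Real.rpow_le_rpow_of_exponent_le (by simp) (by linarith)
    have hx1 : (1:ℝ) ≤ (n:ℝ)+1 := le_add_of_nonneg_left n.cast_nonneg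
    have h4 := bern_low hs hs1 (x := (n:ℝ)+1) hx1
    rw [add_sub_cancel_right] at h4
    have h5 : ((n:ℝ)+1) ^ (s-1) ≤ (((n:ℝ)+1) ^ s - (n:ℝ) ^ s) / s := by
      rw [le_div_iff₀ hs]; linarith
    have hcast : g (n+1) = ((n:ℝ)+1) ^ s := by rw [hg]; push_cast; ring_nf
    calc f n ≤ C ^ 2 * ((1 + (n:ℝ)) ^ (-r)) ^ 2 := h1
      _ = C ^ 2 * (1 + (n:ℝ)) ^ (-(2*r)) := by rw [h2]
      _ ≤ C ^ 2 * (1 + (n:ℝ)) ^ (s-1) := mul_le_mul_of_nonneg_left h3 (sq_nonneg C)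
      _ = C ^ 2 * ((n:ℝ)+1) ^ (s-1) := by rw [add_comm]
      _ ≤ C ^ 2 * ((((n:ℝ)+1) ^ s - (n:ℝ) ^ s) / s) :=
          mul_le_mul_of_nonneg_left h5 (sq_nonneg C)
      _ = C ^ 2 / s * (g (n+1) - g n) := by rw [hcast, hg]; ring
  have hsum1 : ∑ n ∈ T, f n ≤ C ^ 2 / s * ∑ n ∈ T, (g (n+1) - g n) := by
    rw [Finset.mul_sum]; exact Finset.sum_le_sum hterm
  have hS : ∑ n ∈ T, (g (n+1) - g n) ≤ 2 := by
    have hnn : ∀ n : ℕ, 0 ≤ g (n+1) - g n := by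
      intro n
      have := Real.rpow_le_rpow n.cast_nonneg
        (by push_cast; linarith : (n:ℝ) ≤ ((n+1:ℕ):ℝ)) hs.le
      simp only [hg]; linarith
    rcases T.eq_empty_or_nonempty with hE | hne
    · rw [hE]; norm_num
    · set a := T.min' hne with ha
      set b := T.max' hne with hb
      have hab : a ≤ b := T.min'_le b (T.max'_mem hne)
      have hsub : T ⊆ Finset.Icc a b := fun n hn =>
        Finset.mem_Icc.mpr ⟨T.min'_le n hn, T.le_max' n hn⟩
      have step1 : ∑ n ∈ T, (g (n+1) - g n) ≤ ∑ n ∈ Finset.Icc a b, (g (n+1) - g n) :=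
        Finset.sum_le_sum_of_subset_of_nonneg hsub (fun n _ _ => hnn n)
      have htel : ∑ n ∈ Finset.Icc a b, (g (n+1) - g n) = g (b+1) - g a := by
        rw [← Finset.Ico_add_one_right_eq_Icc, Finset.sum_Ico_eq_sub _ (by omega : a ≤ b + 1),
          Finset.sum_range_sub g, Finset.sum_range_sub g]
        ring
      have haA : a ∈ A := hfin.mem_toFinset.mp (T.min'_mem hne)
      have hbA : b ∈ A := hfin.mem_toFinset.mp (T.max'_mem hne)
      have hb1 : 1 ≤ b := by
        rcases Nat.eq_zero_or_pos b with h | h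
        · exact absurd (h ▸ hbA) h0A
        · exact h
      have hbR : (b:ℝ) ^ s < R + 1 := hbA.2
      have haR : R < (a:ℝ) ^ s := haA.1
      have hup : g (b+1) ≤ g b + 1 := by
        have := bern_up hs hs1 (x := (b:ℝ)) (by exact_mod_cast hb1)
        simp only [hg]; push_cast; linarith
      calc ∑ n ∈ T, (g (n+1) - g n) ≤ g (b+1) - g a := by rw [← htel]; exact step1
        _ ≤ (g b + 1) - g a := by linarith
        _ ≤ 2 := by simp only [hg]; linarith
  calc ∑ n ∈ T, f n ≤ C ^ 2 / s * ∑ n ∈ T, (g (n+1) - g n) := hsum1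
    _ ≤ C ^ 2 / s * 2 := by
        apply mul_le_mul_of_nonneg_left hS (by positivity)
end

section
/- Let (a_n)_{n≥0} be positive reals with a_{-1} = 0, and let (f_n^{(+)}) and (f_n^{(-)}) be two solutions of the three-term recurrence a_{n-1} u_{n-1} + b_n u_n + a_n u_{n+1} = z u_n with asymptotics f_n^{(±)} = v_n e^{±iΩ_n}(1 + ε_n^{(±)}), where v_n > 0, Ω_n ∈ ℝ. Suppose Ω_{n+1} - Ω_n → ϖ with ϖ ∉ πℤ and ε_n^{(±)} → 0 as n → ∞, and suppose the Wronskian W = a_n(f_n^{(+)} f_{n+1}^{(-)} - f_{n+1}^{(+)} f_n^{(-)}) (which is independent of n) is nonzero. Then lim_{n→∞} a_n v_n v_{n+1} exists and equals |W|/(2|sin ϖ|) ≠ 0. -/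
open Filter Topology

/-- Proposition 2.2, case 1°: if two solutions of the Jacobi recurrence have the
oscillating asymptotics `f_n^{(±)} = v_n e^{±iΩ_n}(1 + ε_n^{(±)})` with
`Ω_{n+1} - Ω_n → ϖ ∉ πℤ`, `ε_n^{(±)} → 0`, and the (constant) Wronskian
`W = a₀(f₀⁺ f₁⁻ - f₁⁺ f₀⁻)` is nonzero, then `a_n v_n v_{n+1}` converges to the
nonzero limit `|W| / (2|sin ϖ|)`. -/
theorem jost_amplitude_limit
    (a b : ℕ → ℝ) (ha : ∀ n, 0 < a n) (z : ℂ)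
    (fp fm : ℕ → ℂ)
    (hfp : ∀ n : ℕ, (a n : ℂ) * fp n + (b (n + 1) : ℂ) * fp (n + 1) +
      (a (n + 1) : ℂ) * fp (n + 2) = z * fp (n + 1))
    (hfm : ∀ n : ℕ, (a n : ℂ) * fm n + (b (n + 1) : ℂ) * fm (n + 1) +
      (a (n + 1) : ℂ) * fm (n + 2) = z * fm (n + 1))
    (v : ℕ → ℝ) (hv : ∀ n, 0 < v n) (Ω : ℕ → ℝ) (εp εm : ℕ → ℂ)
    (hfp_asym : ∀ n, fp n = (v n : ℂ) * Complex.exp (Complex.I * (Ω n : ℝ)) * (1 + εp n))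
    (hfm_asym : ∀ n, fm n = (v n : ℂ) * Complex.exp (-Complex.I * (Ω n : ℝ)) * (1 + εm n))
    (ϖ : ℝ) (hΩ : Tendsto (fun n => Ω (n + 1) - Ω n) atTop (𝓝 ϖ))
    (hϖ : ∀ k : ℤ, ϖ ≠ Real.pi * k)
    (hεp : Tendsto εp atTop (𝓝 0)) (hεm : Tendsto εm atTop (𝓝 0))
    (W : ℂ) (hW_def : W = (a 0 : ℂ) * (fp 0 * fm 1 - fp 1 * fm 0)) (hW : W ≠ 0) :
    Tendsto (fun n => a n * v n * v (n + 1)) atTop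
      (𝓝 (‖W‖ / (2 * |Real.sin ϖ|))) ∧ ‖W‖ / (2 * |Real.sin ϖ|) ≠ 0 := by
  -- sin ϖ ≠ 0
  have hsin : Real.sin ϖ ≠ 0 := by
    intro h
    rcases Real.sin_eq_zero_iff.mp h with ⟨k, hk⟩
    exact hϖ k (by linarith [mul_comm (k : ℝ) Real.pi])
  -- Wronskian constancy
  have hWn : ∀ n, W = (a n : ℂ) * (fp n * fm (n + 1) - fp (n + 1) * fm n) := by
    intro n
    induction n with
    | zero => exact hW_def
    | succ n ih => linear_combination ih - fp (n + 1) * hfm n + fm (n + 1) * hfp n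
  -- The oscillating factor
  set E : ℕ → ℂ := fun n =>
    Complex.exp (Complex.I * ((Ω n - Ω (n + 1) : ℝ) : ℂ)) * (1 + εp n) * (1 + εm (n + 1)) -
    Complex.exp (Complex.I * ((Ω (n + 1) - Ω n : ℝ) : ℂ)) * (1 + εp (n + 1)) * (1 + εm n)
    with hEdef
  have hexp : ∀ x y : ℝ, Complex.exp (Complex.I * ((x : ℂ) - y)) =
      Complex.exp (Complex.I * x) * Complex.exp (-Complex.I * y) := by
    intro x y
    rw [← Complex.exp_add]
    congr 1
    ring
  have hE : ∀ n, W = ((a n * v n * v (n + 1) : ℝ) : ℂ) * E n := by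
    intro n
    rw [hWn n, hfp_asym n, hfp_asym (n + 1), hfm_asym n, hfm_asym (n + 1), hEdef]
    push_cast
    rw [hexp, hexp]
    ring
  -- limit of E
  have hL : Tendsto E atTop
      (𝓝 (Complex.exp (Complex.I * ((-ϖ : ℝ) : ℂ)) - Complex.exp (Complex.I * ((ϖ : ℝ) : ℂ)))) := by
    have h1 : Tendsto (fun n => ((Ω n - Ω (n + 1) : ℝ) : ℂ)) atTop (𝓝 ((-ϖ : ℝ) : ℂ)) := by
      exact (Complex.continuous_ofReal.tendsto _).comp (by simpa using hΩ.neg.congr (fun n => by ring))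
    have h2 : Tendsto (fun n => ((Ω (n + 1) - Ω n : ℝ) : ℂ)) atTop (𝓝 ((ϖ : ℝ) : ℂ)) :=
      (Complex.continuous_ofReal.tendsto _).comp hΩ
    have hεp' : Tendsto (fun n => εp (n + 1)) atTop (𝓝 0) := hεp.comp (tendsto_add_atTop_nat 1)
    have hεm' : Tendsto (fun n => εm (n + 1)) atTop (𝓝 0) := hεm.comp (tendsto_add_atTop_nat 1)
    have e1 : Tendsto (fun n => Complex.exp (Complex.I * ((Ω n - Ω (n + 1) : ℝ) : ℂ)))
        atTop (𝓝 (Complex.exp (Complex.I * ((-ϖ : ℝ) : ℂ)))) :=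
      (Complex.continuous_exp.tendsto _).comp ((tendsto_const_nhds).mul h1)
    have e2 : Tendsto (fun n => Complex.exp (Complex.I * ((Ω (n + 1) - Ω n : ℝ) : ℂ)))
        atTop (𝓝 (Complex.exp (Complex.I * ((ϖ : ℝ) : ℂ)))) :=
      (Complex.continuous_exp.tendsto _).comp ((tendsto_const_nhds).mul h2)
    have one : Tendsto (fun _ : ℕ => (1 : ℂ)) atTop (𝓝 1) := tendsto_const_nhds
    have := ((e1.mul (one.add hεp)).mul (one.add hεm')).sub
      ((e2.mul (one.add hεp')).mul (one.add hεm))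
    simpa only [hEdef, Complex.ofReal_sub, Complex.ofReal_neg, neg_mul, mul_neg, add_zero, mul_one] using this
  set L : ℂ := Complex.exp (Complex.I * ((-ϖ : ℝ) : ℂ)) - Complex.exp (Complex.I * ((ϖ : ℝ) : ℂ))
    with hLdef
  have hLval : L = ((-2 * Real.sin ϖ : ℝ) : ℂ) * Complex.I := by
    rw [hLdef, mul_comm Complex.I, mul_comm Complex.I, Complex.exp_mul_I, Complex.exp_mul_I]
    push_cast
    rw [Complex.cos_neg, Complex.sin_neg]
    rw [← Complex.ofReal_sin]
    push_cast
    ring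
  have hLnorm : ‖L‖ = 2 * |Real.sin ϖ| := by
    rw [hLval, norm_mul, Complex.norm_real, Complex.norm_I, mul_one, Real.norm_eq_abs,
      abs_mul, abs_neg]
    norm_num
  -- a n v n v (n+1) = ‖W‖ / ‖E n‖
  have key : ∀ n, a n * v n * v (n + 1) = ‖W‖ / ‖E n‖ := by
    intro n
    have hpos : 0 < a n * v n * v (n + 1) := mul_pos (mul_pos (ha n) (hv n)) (hv (n + 1))
    have hnorm : ‖W‖ = (a n * v n * v (n + 1)) * ‖E n‖ := by
      rw [hE n, norm_mul, Complex.norm_real, Real.norm_eq_abs, abs_of_pos hpos]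
    have hEne : ‖E n‖ ≠ 0 := by
      intro h
      rw [h, mul_zero] at hnorm
      exact hW (norm_eq_zero.mp hnorm)
    rw [hnorm, mul_div_assoc, div_self hEne, mul_one]
  have hnormE : Tendsto (fun n => ‖E n‖) atTop (𝓝 (2 * |Real.sin ϖ|)) := by
    have := hL.norm
    rwa [hLnorm] at this
  have hne : (2 * |Real.sin ϖ| : ℝ) ≠ 0 := by
    have h0 : 0 < |Real.sin ϖ| := abs_pos.mpr hsin
    exact ne_of_gt (by linarith)
  constructor
  · refine Tendsto.congr (fun n => (key n).symm) ?_
    exact tendsto_const_nhds.div hnormE hne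
  · exact div_ne_zero (norm_ne_zero_iff.mpr hW) hne
end
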